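/- Let K be a field of characteristic zero and V a finite-dimensional K-vector space. Let B and B' be alternating bilinear forms on V, both nonzero, such that the wedge product B∧B' vanishes identically as an alternating 4-linear form on V. Then the rank of B is at most 4 and the rank of B' is at most 4, where the rank of an alternating bilinear form B is the rank of the associated linear map V → V*, v ↦ B(v,·). -/

import Mathlib

/-- The wedge product of two alternating bilinear forms `B`, `B'` on `V`, as an
alternating 4-linear form. -/
def wedgeProd {K V : Type*} [CommRing K] (B B' : V → V → K)
    (x₁ x₂ x₃ x₄ : V) : K :=
  B x₁ x₂ * B' x₃ x₄ - B x₁ x₃ * B' x₂ x₄ + B x₁ x₄ * B' x₂ x₃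
    + B' x₁ x₂ * B x₃ x₄ - B' x₁ x₃ * B x₂ x₄ + B' x₁ x₄ * B x₂ x₃

/-- If the associated map of a bilinear form lands in the span of four
functionals, the rank is at most 4. -/
lemma rank_le_four_of_mem_span {K V : Type*} [Field K] [AddCommGroup V] [Module K V]
    (B : V →ₗ[K] V →ₗ[K] K) (g : Fin 4 → (V →ₗ[K] K))
    (h : ∀ u : V, B u ∈ Submodule.span K (Set.range g)) :
    LinearMap.rank B ≤ 4 := by
  have h1 : LinearMap.range B ≤ Submodule.span K (Set.range g) := by
    rintro x ⟨u, rfl⟩; exact h u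
  calc LinearMap.rank B ≤ Module.rank K (Submodule.span K (Set.range g)) :=
        Submodule.rank_mono h1
    _ ≤ Cardinal.mk (Set.range g) := rank_span_le _
    _ ≤ 4 := by simpa using Cardinal.mk_range_le_lift (f := g)

/-- A vector space over a field is never the union of two proper "vanishing"
sets of functionals coming from a bilinear form. -/
lemma exists_common {K V : Type*} [Field K] [AddCommGroup V] [Module K V]
    (B : LinearMap.BilinForm K V) (a b : V)
    (ha : ∃ u, B a u ≠ 0) (hb : ∃ u, B b u ≠ 0) :
    ∃ c, B a c ≠ 0 ∧ B b c ≠ 0 := by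
  obtain ⟨u, hu⟩ := ha
  obtain ⟨w, hwv⟩ := hb
  by_cases h1 : B b u ≠ 0
  · exact ⟨u, hu, h1⟩
  by_cases h2 : B a w ≠ 0
  · exact ⟨w, h2, hwv⟩
  push_neg at h1 h2
  refine ⟨u + w, ?_, ?_⟩
  · simpa [h2] using hu
  · simpa [h1] using hwv

/-- Main one-sided lemma: the rank of `B` is at most 4. -/
lemma one_sided {K V : Type*} [Field K] [CharZero K] [AddCommGroup V] [Module K V]
    (B B' : LinearMap.BilinForm K V)
    (hAltB : LinearMap.IsAlt B) (hAltB' : LinearMap.IsAlt B')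
    (hB : B ≠ 0) (hB' : B' ≠ 0)
    (hw : ∀ x₁ x₂ x₃ x₄ : V,
      wedgeProd (fun u w => B u w) (fun u w => B' u w) x₁ x₂ x₃ x₄ = 0) :
    LinearMap.rank (B : V →ₗ[K] V →ₗ[K] K) ≤ 4 := by
  have hw' : ∀ x₁ x₂ x₃ x₄ : V,
      B x₁ x₂ * B' x₃ x₄ - B x₁ x₃ * B' x₂ x₄ + B x₁ x₄ * B' x₂ x₃
        + B' x₁ x₂ * B x₃ x₄ - B' x₁ x₃ * B x₂ x₄ + B' x₁ x₄ * B x₂ x₃ = 0 := by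
    intro x₁ x₂ x₃ x₄
    have := hw x₁ x₂ x₃ x₄
    simpa [wedgeProd] using this
  by_cases hcase : ∃ a b, B' a b ≠ 0 ∧ B a b = 0
  · -- Case A: a pair where B' is nonzero but B vanishes
    obtain ⟨a, b, hc, hab⟩ := hcase
    set c := B' a b with hcdef
    refine rank_le_four_of_mem_span B ![B'.flip b, B'.flip a, B.flip b, B.flip a] (fun u => ?_)
    have key : B u = (c⁻¹ * B u a) • B'.flip b + (-(c⁻¹ * B u b)) • B'.flip a
        + (c⁻¹ * B' u a) • B.flip b + (-(c⁻¹ * B' u b)) • B.flip a := by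
      ext v
      simp only [LinearMap.add_apply, LinearMap.smul_apply, LinearMap.flip_apply,
        smul_eq_mul, neg_mul, LinearMap.neg_apply]
      have h := hw' u v a b
      rw [hab] at h
      have hf : ∀ (F : LinearMap.BilinForm K V) (x y : V), F.flip x y = F y x :=
        fun _ _ _ => rfl
      simp only [hf]
      field_simp
      linear_combination h
    rw [key]
    refine Submodule.add_mem _ (Submodule.add_mem _ (Submodule.add_mem _ ?_ ?_) ?_) ?_
    · exact Submodule.smul_mem _ _ (Submodule.subset_span ⟨0, rfl⟩)
    · exact Submodule.smul_mem _ _ (Submodule.subset_span ⟨1, rfl⟩)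
    · exact Submodule.smul_mem _ _ (Submodule.subset_span ⟨2, rfl⟩)
    · exact Submodule.smul_mem _ _ (Submodule.subset_span ⟨3, rfl⟩)
  · -- Case B: B a b = 0 implies B' a b = 0; then B' is proportional to B
    push_neg at hcase
    have hzero : ∀ a b, B a b = 0 → B' a b = 0 := by
      intro a b h
      by_contra h'
      exact hcase a b h' h
    -- B ≠ 0 gives a pair with nonzero value
    have hBpair : ∃ a b, B a b ≠ 0 := by
      by_contra h
      push_neg at h
      apply hB
      ext a b
      simp [h a b]
    -- pointwise proportionality of functionals
    have L1 : ∀ a : V, ∃ c : K, ∀ v, B' a v = c * B a v := by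
      intro a
      by_cases ha : ∀ v, B a v = 0
      · exact ⟨0, fun v => by rw [hzero a v (ha v), ha v, mul_zero]⟩
      · push_neg at ha
        obtain ⟨x, hx⟩ := ha
        refine ⟨B' a x / B a x, fun v => ?_⟩
        have h0 : B a (B a v • x - B a x • v) = 0 := by
          simp [mul_comm]
        have h1 : B' a (B a v • x - B a x • v) = 0 := hzero _ _ h0
        simp only [map_sub, map_smul, smul_eq_mul] at h1
        field_simp
        linear_combination -h1
    choose lam hlam using L1
    -- lam is constant on vectors with nonzero functionals
    have L2 : ∀ a b, B a b ≠ 0 → lam a = lam b := by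
      intro a b hab
      have e1 : B' a b = lam a * B a b := hlam a b
      have e2 : B' b a = lam b * B b a := hlam b a
      have sB : B b a = -(B a b) := (hAltB.neg a b).symm
      have sB' : B' b a = -(B' a b) := (hAltB'.neg a b).symm
      rw [sB, sB'] at e2
      have : lam a * B a b = lam b * B a b := by linear_combination -e1 - e2
      exact mul_right_cancel₀ hab this
    obtain ⟨a₀, b₀, hd⟩ := hBpair
    set lam0 := lam a₀ with hlam0
    have hprop : ∀ u v, B' u v = lam0 * B u v := by
      intro u v
      by_cases hu : ∀ w, B u w = 0
      · rw [hzero u v (hu v), hu v, mul_zero]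
      · push_neg at hu
        obtain ⟨c, hc1, hc2⟩ := exists_common B u a₀ hu ⟨b₀, hd⟩
        have : lam u = lam a₀ := (L2 u c hc1).trans (L2 a₀ c hc2).symm
        rw [hlam u v, this]
    -- lam0 ≠ 0
    have hlam0ne : lam0 ≠ 0 := by
      intro h0
      apply hB'
      ext u v
      simp [hprop u v, h0]
    -- Pfaffian-type identity for B
    have hP : ∀ x₁ x₂ x₃ x₄ : V,
        B x₁ x₂ * B x₃ x₄ - B x₁ x₃ * B x₂ x₄ + B x₁ x₄ * B x₂ x₃ = 0 := by
      intro x₁ x₂ x₃ x₄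
      have h := hw' x₁ x₂ x₃ x₄
      simp only [hprop] at h
      have h2 : (2 * lam0) * (B x₁ x₂ * B x₃ x₄ - B x₁ x₃ * B x₂ x₄
          + B x₁ x₄ * B x₂ x₃) = 0 := by linear_combination h
      rcases mul_eq_zero.mp h2 with h3 | h3
      · rcases mul_eq_zero.mp h3 with h4 | h4
        · norm_num at h4
        · exact absurd h4 hlam0ne
      · exact h3
    -- rank at most 2 ≤ 4
    refine rank_le_four_of_mem_span B ![B.flip b₀, B.flip a₀, 0, 0] (fun u => ?_)
    have key : B u = ((B a₀ b₀)⁻¹ * B u a₀) • B.flip b₀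
        + (-((B a₀ b₀)⁻¹ * B u b₀)) • B.flip a₀ := by
      ext v
      simp only [LinearMap.add_apply, LinearMap.smul_apply, LinearMap.flip_apply,
        smul_eq_mul, neg_mul, LinearMap.neg_apply]
      have h := hP u v a₀ b₀
      have hf : ∀ (F : LinearMap.BilinForm K V) (x y : V), F.flip x y = F y x :=
        fun _ _ _ => rfl
      simp only [hf]
      field_simp
      linear_combination h
    rw [key]
    refine Submodule.add_mem _ ?_ ?_
    · exact Submodule.smul_mem _ _ (Submodule.subset_span ⟨0, rfl⟩)
    · exact Submodule.smul_mem _ _ (Submodule.subset_span ⟨1, rfl⟩)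

/-- If `B`, `B'` are nonzero alternating bilinear forms on a finite-dimensional
vector space over a field of characteristic zero with `B∧B' = 0`, then both `B`
and `B'` have rank at most 4, where the rank of a bilinear form is the rank of
the associated linear map `V → V*`, `v ↦ B(v,·)`. -/
theorem vanishing_wedge_rank_le_four
    {K V : Type*} [Field K] [CharZero K] [AddCommGroup V] [Module K V]
    [FiniteDimensional K V]
    (B B' : LinearMap.BilinForm K V)
    (hAltB : LinearMap.IsAlt B) (hAltB' : LinearMap.IsAlt B')
    (hB : B ≠ 0) (hB' : B' ≠ 0)
    (hw : ∀ x₁ x₂ x₃ x₄ : V,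
      wedgeProd (fun u w => B u w) (fun u w => B' u w) x₁ x₂ x₃ x₄ = 0) :
    LinearMap.rank (B : V →ₗ[K] V →ₗ[K] K) ≤ 4 ∧
      LinearMap.rank (B' : V →ₗ[K] V →ₗ[K] K) ≤ 4 := by
  have hw2 : ∀ x₁ x₂ x₃ x₄ : V,
      wedgeProd (fun u w => B' u w) (fun u w => B u w) x₁ x₂ x₃ x₄ = 0 := by
    intro x₁ x₂ x₃ x₄
    have := hw x₁ x₂ x₃ x₄
    simp only [wedgeProd] at this ⊢
    linear_combination this
  exact ⟨one_sided B B' hAltB hAltB' hB hB' hw,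
    one_sided B' B hAltB' hAltB hB' hB hw2⟩
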